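/- The period {1, φ} generates a fractal mold: the sequence F given by φ_i = ⌊log₂(i+1)⌋ + f_{⌊log₂(i+1)⌋}(i + 1 − 2^{⌊log₂(i+1)⌋}), where f is built from p = φ − 1, is a normalized ℝ-mold (in particular, it is strictly increasing and closed under addition), has granularity 2 with first period {1, φ}, and is fractal. -/

import Mathlib

/-- An `ℝ`-mold: a strictly increasing sequence of nonnegative reals starting at `0`,
whose consecutive differences become arbitrarily small, closed under addition. -/
def IsRMold (μ : ℕ → ℝ) : Prop :=
  StrictMono μ ∧ (∀ i, 0 ≤ μ i) ∧ μ 0 = 0 ∧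
    (∀ ε : ℝ, 0 < ε → ∃ n₀ : ℕ, ∀ n ≥ n₀, μ (n + 1) - μ n < ε) ∧
    (∀ i j : ℕ, ∃ k : ℕ, μ k = μ i + μ j)

/-- The `i`-th period of a (normalized) mold `μ`: elements `x` of the mold with `i ≤ x < i + 1`. -/
def period (μ : ℕ → ℝ) (i : ℕ) : Set ℝ :=
  {x | (∃ k, μ k = x) ∧ (i : ℝ) ≤ x ∧ x < (i : ℝ) + 1}

/-- A normalized mold is fractal if its periods can be enumerated as
`π_i = {i + τ^{(i)}_0, …, i + τ^{(i)}_{l_i - 1}}` with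
`0 = τ^{(i)}_0 < ⋯ < τ^{(i)}_{l_i - 1} < τ^{(i)}_{l_i} = 1`, and each period is obtained by
dividing each interval of the previous one in the same proportions as the first period divides
`[0, 1]`:
`π_{i+1} = ⋃_{r < l_i} ⋃_{s < l} {(i+1) + τ^{(i)}_r + τ^{(1)}_s (τ^{(i)}_{r+1} - τ^{(i)}_r)}`. -/
def IsFractal (μ : ℕ → ℝ) : Prop :=
  ∃ (l : ℕ → ℕ) (τ : ℕ → ℕ → ℝ),
    (∀ i, 0 < l i) ∧
    (∀ i, τ i 0 = 0) ∧
    (∀ i, τ i (l i) = 1) ∧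
    (∀ i, ∀ r s : ℕ, r < s → s ≤ l i → τ i r < τ i s) ∧
    (∀ i, period μ i = {x | ∃ r < l i, x = (i : ℝ) + τ i r}) ∧
    (∀ i, period μ (i + 1) =
      {x | ∃ r < l i, ∃ s < l 1, x = ((i : ℝ) + 1) + τ i r + τ 1 s * (τ i (r + 1) - τ i r)})

/-- The golden ratio `φ = (1 + √5) / 2`. -/
noncomputable def phi : ℝ := (1 + Real.sqrt 5) / 2

/-- Given `p ∈ (0,1)` (with `q = 1 - p`), the recursively defined division functions
`f_ℓ : {0, …, 2^ℓ - 1} → [0, 1)`: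
`f₀ 0 = 0`, `f_{ℓ+1} n = p * f_ℓ n` if `n < 2^ℓ`, and `f_{ℓ+1} n = p + q * f_ℓ (n - 2^ℓ)`
otherwise. -/
noncomputable def fcut (p : ℝ) : ℕ → ℕ → ℝ
  | 0, _ => 0
  | ℓ + 1, n => if n < 2 ^ ℓ then p * fcut p ℓ n else p + (1 - p) * fcut p ℓ (n - 2 ^ ℓ)

/-- The golden fractal mold `F`:
`φ_i = ⌊log₂ (i+1)⌋ + f_{⌊log₂ (i+1)⌋} (i + 1 - 2 ^ ⌊log₂ (i+1)⌋)` with `p = φ - 1`.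
(Here `⌊log₂ (i+1)⌋ = Nat.log 2 (i+1)`.) -/
noncomputable def Fgold : ℕ → ℝ := fun i =>
  (Nat.log 2 (i + 1) : ℝ) +
    fcut (phi - 1) (Nat.log 2 (i + 1)) (i + 1 - 2 ^ Nat.log 2 (i + 1))

noncomputable def gp : ℝ := phi - 1
lemma sqrt5_sq : Real.sqrt 5 ^ 2 = 5 := Real.sq_sqrt (by norm_num)
lemma gp_pos : 0 < gp := by
  have h := sqrt5_sq; have h0 := Real.sqrt_nonneg 5
  unfold gp phi; nlinarith
lemma gp_lt_one : gp < 1 := by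
  have h := sqrt5_sq; have h0 := Real.sqrt_nonneg 5
  unfold gp phi; nlinarith
lemma hp : gp * gp = 1 - gp := by
  unfold gp phi; linear_combination sqrt5_sq / 4
lemma tps (ℓ : ℕ) : (2:ℕ)^(ℓ+1) = 2^ℓ + 2^ℓ := by rw [pow_succ]; omega
lemma fcut_zero (p : ℝ) (n : ℕ) : fcut p 0 n = 0 := rfl
lemma fcut_succ (p : ℝ) (ℓ n : ℕ) : fcut p (ℓ+1) n =
    if n < 2 ^ ℓ then p * fcut p ℓ n else p + (1 - p) * fcut p ℓ (n - 2 ^ ℓ) := rfl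
lemma fcut_nonneg : ∀ ℓ n, 0 ≤ fcut gp ℓ n := by
  intro ℓ
  induction ℓ with
  | zero => intro n; simp [fcut_zero]
  | succ ℓ ih =>
    intro n; rw [fcut_succ]; split
    · exact mul_nonneg gp_pos.le (ih _)
    · nlinarith [ih (n - 2^ℓ), gp_pos, gp_lt_one]
lemma fcut_lt_one : ∀ ℓ n, n < 2^ℓ → fcut gp ℓ n < 1 := by
  intro ℓ
  induction ℓ with
  | zero => intro n _; rw [fcut_zero]; norm_num
  | succ ℓ ih =>
    intro n hn; rw [fcut_succ]; split
    · rename_i h; nlinarith [ih n h, fcut_nonneg ℓ n, gp_pos, gp_lt_one]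
    · rename_i h
      have h2 : n - 2^ℓ < 2^ℓ := by simp at h; have := tps ℓ; omega
      nlinarith [ih _ h2, fcut_nonneg ℓ (n - 2^ℓ), gp_pos, gp_lt_one]
lemma fcut_zero' : ∀ ℓ, fcut gp ℓ 0 = 0 := by
  intro ℓ; induction ℓ with
  | zero => rfl
  | succ ℓ ih => rw [fcut_succ, if_pos (by positivity), ih]; ring

/-! gc : extended cut function -/
noncomputable def gc (ℓ n : ℕ) : ℝ := if n < 2^ℓ then fcut gp ℓ n else 1
lemma gc_of_lt {ℓ n : ℕ} (h : n < 2^ℓ) : gc ℓ n = fcut gp ℓ n := if_pos h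
lemma gc_of_ge {ℓ n : ℕ} (h : 2^ℓ ≤ n) : gc ℓ n = 1 := if_neg (by omega)
lemma gc_zero (ℓ : ℕ) : gc ℓ 0 = 0 := by rw [gc_of_lt (by positivity), fcut_zero']
lemma gc_nonneg (ℓ n : ℕ) : 0 ≤ gc ℓ n := by
  unfold gc; split; · exact fcut_nonneg ℓ n
  · norm_num
lemma gc_le_one (ℓ n : ℕ) : gc ℓ n ≤ 1 := by
  unfold gc; split; · exact (fcut_lt_one ℓ n (by assumption)).le
  · norm_num
lemma gc_lt_one {ℓ n : ℕ} (h : n < 2^ℓ) : gc ℓ n < 1 := by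
  rw [gc_of_lt h]; exact fcut_lt_one ℓ n h
lemma gcP {ℓ n : ℕ} (h : n ≤ 2^ℓ) : gc (ℓ+1) n = gp * gc ℓ n := by
  rcases h.lt_or_eq with h | h
  · rw [gc_of_lt h, gc_of_lt (by have := tps ℓ; omega), fcut_succ, if_pos h]
  · subst h
    rw [gc_of_lt (by have := tps ℓ; have := pow_pos (show (0:ℕ)<2 by norm_num) ℓ; omega), fcut_succ, if_neg (by omega),
      gc_of_ge le_rfl]
    simp [fcut_zero']
lemma gcQ {ℓ n : ℕ} (h1 : 2^ℓ ≤ n) (h2 : n ≤ 2^(ℓ+1)) :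
    gc (ℓ+1) n = gp + (1 - gp) * gc ℓ (n - 2^ℓ) := by
  rcases h2.lt_or_eq with h | h
  · rw [gc_of_lt h, fcut_succ, if_neg (by omega),
      gc_of_lt (by have := tps ℓ; omega)]
  · subst h
    rw [gc_of_ge le_rfl, gc_of_ge (by have := tps ℓ; omega)]
    ring
lemma gc_adj : ∀ ℓ n, n < 2^ℓ → gc ℓ n < gc ℓ (n+1) := by
  intro ℓ
  induction ℓ with
  | zero =>
    intro n hn
    have : n = 0 := by simpa using hn
    subst this
    rw [gc_zero, gc_of_ge (by norm_num)]; norm_num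
  | succ ℓ ih =>
    intro n hn
    rcases le_or_gt (n+1) (2^ℓ) with h | h
    · rw [gcP (by omega), gcP h]
      exact mul_lt_mul_of_pos_left (ih n (by omega)) gp_pos
    · rcases le_or_gt (2^ℓ) n with h2 | h2
      · rw [gcQ h2 (by have := tps ℓ; omega), gcQ (by omega) (by have := tps ℓ; omega)]
        have e : n + 1 - 2^ℓ = (n - 2^ℓ) + 1 := by omega
        rw [e]
        have := ih (n - 2^ℓ) (by have := tps ℓ; omega)
        nlinarith [gp_pos, gp_lt_one]
      · -- n < 2^ℓ < n+1 : n+1 = 2^ℓ impossible since h : 2^ℓ < n+1 and h2 : n < 2^ℓ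
        omega
lemma gc_mono : ∀ {ℓ a b : ℕ}, a < b → b ≤ 2^ℓ → gc ℓ a < gc ℓ b := by
  intro ℓ a b
  induction b with
  | zero => omega
  | succ b ih =>
    intro hab hb
    rcases Nat.lt_succ_iff_lt_or_eq.mp hab with h | h
    · exact (ih h (by omega)).trans (gc_adj ℓ b (by omega))
    · subst h; exact gc_adj ℓ a (by omega)
lemma gc_gap : ∀ ℓ n, n < 2^ℓ → gc ℓ (n+1) - gc ℓ n ≤ gp^ℓ := by
  intro ℓ
  induction ℓ with
  | zero =>
    intro n hn
    have : n = 0 := by simpa using hn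
    subst this
    rw [gc_zero, gc_of_ge (by norm_num)]; norm_num
  | succ ℓ ih =>
    intro n hn
    rcases le_or_gt (n+1) (2^ℓ) with h | h
    · rw [gcP (show n+1 ≤ 2^ℓ from h), gcP (show n ≤ 2^ℓ by omega), pow_succ]
      have := ih n (by omega)
      nlinarith [gp_pos]
    · have h2 : 2^ℓ ≤ n := by omega
      rw [gcQ h2 (by have := tps ℓ; omega), gcQ (by omega) (by have := tps ℓ; omega)]
      have e : n + 1 - 2^ℓ = (n - 2^ℓ) + 1 := by omega
      rw [e, pow_succ]
      have h3 : n - 2^ℓ < 2^ℓ := by have := tps ℓ; omega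
      have := ih (n - 2^ℓ) h3
      have hd : 0 ≤ gc ℓ (n - 2^ℓ + 1) - gc ℓ (n - 2^ℓ) := sub_nonneg.mpr (gc_adj ℓ _ h3).le
      nlinarith [gp_pos, gp_lt_one, hp]

lemma E1 : ∀ ℓ r, r ≤ 2^ℓ → gc (ℓ+1) (2*r) = gc ℓ r := by
  intro ℓ
  induction ℓ with
  | zero =>
    intro r hr
    interval_cases r
    · rw [gc_zero, gc_zero]
    · rw [gc_of_ge (by norm_num), gc_of_ge (by norm_num)]
  | succ ℓ ih =>
    intro r hr
    rcases le_or_gt r (2^ℓ) with h | h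
    · rw [gcP (show 2*r ≤ 2^(ℓ+1) by have := tps ℓ; omega), ih r h, gcP h]
    · have h1 : 2^(ℓ+1) ≤ 2*r := by have := tps ℓ; omega
      have h2 : 2*r ≤ 2^(ℓ+2) := by have h4 : (2:ℕ)^(ℓ+2) = 2^(ℓ+1)+2^(ℓ+1) := tps (ℓ+1); have := tps ℓ; omega
      rw [gcQ h1 h2, gcQ (by omega) hr]
      have e : 2*r - 2^(ℓ+1) = 2*(r - 2^ℓ) := by have := tps ℓ; omega
      rw [e, ih (r - 2^ℓ) (by have := tps ℓ; omega)]

lemma E2 : ∀ ℓ r, r < 2^ℓ → gc (ℓ+1) (2*r+1) = gc ℓ r + gp * (gc ℓ (r+1) - gc ℓ r) := by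
  intro ℓ
  induction ℓ with
  | zero =>
    intro r hr
    have : r = 0 := by simpa using hr
    subst this
    have hg : gc 1 1 = gp := by
      rw [gc_of_lt (by norm_num), fcut_succ, if_neg (by norm_num)]
      simp [fcut_zero]
    rw [show 2*0+1 = 1 from rfl, hg, gc_zero, gc_of_ge (by norm_num)]
    ring
  | succ ℓ ih =>
    intro r hr
    rcases lt_or_ge r (2^ℓ) with h | h
    · have hb : 2*r+1 ≤ 2^(ℓ+1) := by have := tps ℓ; omega
      rw [gcP hb, ih r h, gcP (show r ≤ 2^ℓ by omega), gcP (show r+1 ≤ 2^ℓ by omega)]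
      ring
    · have h1 : 2^(ℓ+1) ≤ 2*r+1 := by have := tps ℓ; omega
      have h2 : 2*r+1 ≤ 2^(ℓ+2) := by have h4 : (2:ℕ)^(ℓ+2) = 2^(ℓ+1)+2^(ℓ+1) := tps (ℓ+1); have := tps ℓ; omega
      rw [gcQ h1 h2, gcQ h (by omega), gcQ (show 2^ℓ ≤ r+1 by omega) (by have := tps ℓ; omega)]
      have e : 2*r+1 - 2^(ℓ+1) = 2*(r - 2^ℓ)+1 := by have := tps ℓ; omega
      have e2 : r + 1 - 2^ℓ = (r - 2^ℓ) + 1 := by omega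
      rw [e, e2, ih (r - 2^ℓ) (by have := tps ℓ; omega)]
      ring

lemma Fgold_def (k : ℕ) : Fgold k =
    (Nat.log 2 (k + 1) : ℝ) + fcut gp (Nat.log 2 (k + 1)) (k + 1 - 2 ^ Nat.log 2 (k + 1)) := rfl

lemma log_le (k : ℕ) : 2 ^ Nat.log 2 (k+1) ≤ k + 1 :=
  Nat.pow_log_le_self 2 (by omega)
lemma log_gt (k : ℕ) : k + 1 < 2 ^ (Nat.log 2 (k+1) + 1) :=
  Nat.lt_pow_succ_log_self (by norm_num) _

lemma Fgold_gc (k : ℕ) : Fgold k =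
    (Nat.log 2 (k + 1) : ℝ) + gc (Nat.log 2 (k + 1)) (k + 1 - 2 ^ Nat.log 2 (k + 1)) := by
  rw [Fgold_def, gc_of_lt]
  have := log_le k; have := log_gt k; have := tps (Nat.log 2 (k+1)); omega

lemma Fgold_eq (L n : ℕ) (h : n < 2^L) : Fgold (2^L - 1 + n) = (L : ℝ) + fcut gp L n := by
  have h1 : 0 < 2^L := pow_pos (by norm_num) L
  have hk : (2^L - 1 + n) + 1 = 2^L + n := by omega
  have hlog : Nat.log 2 (2^L + n) = L :=
    Nat.log_eq_of_pow_le_of_lt_pow (by omega) (by have := tps L; omega)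
  rw [Fgold_def, hk, hlog]
  congr 2
  omega

lemma Fgold_succ (k : ℕ) : Fgold (k+1) =
    (Nat.log 2 (k + 1) : ℝ) + gc (Nat.log 2 (k + 1)) ((k + 1 - 2 ^ Nat.log 2 (k + 1)) + 1) := by
  have h1 := log_le k
  have h2 := log_gt k
  have h3 := tps (Nat.log 2 (k+1))
  rcases lt_or_ge (k+2) (2^(Nat.log 2 (k+1)+1)) with h | h
  · have hlog : Nat.log 2 (k+2) = Nat.log 2 (k+1) :=
      Nat.log_eq_of_pow_le_of_lt_pow (by omega) h
    rw [Fgold_def, show k+1+1 = k+2 from rfl, hlog, gc_of_lt (by omega)]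
    congr 2
    omega
  · have hk2 : k + 2 = 2^(Nat.log 2 (k+1)+1) := by omega
    have hlog : Nat.log 2 (k+2) = Nat.log 2 (k+1) + 1 := by
      rw [hk2, Nat.log_pow (by norm_num)]
    have he : k + 1 - 2^(Nat.log 2 (k+1)) + 1 = 2^(Nat.log 2 (k+1)) := by omega
    rw [Fgold_def, show k+1+1 = k+2 from rfl, hlog, he, gc_of_ge le_rfl, hk2]
    rw [Nat.sub_self, fcut_zero']
    push_cast
    ring

lemma Fgold_strictMono : StrictMono Fgold := by
  apply strictMono_nat_of_lt_succ
  intro k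
  rw [Fgold_gc k, Fgold_succ k]
  have h1 := log_le k
  have h2 := log_gt k
  have hn : k + 1 - 2 ^ Nat.log 2 (k+1) < 2 ^ Nat.log 2 (k+1) := by
    have := tps (Nat.log 2 (k+1)); omega
  have := gc_adj _ _ hn
  linarith

lemma Fgold_zero : Fgold 0 = 0 := by
  have := Fgold_eq 0 0 (by norm_num)
  simpa [fcut_zero] using this

lemma Fgold_one : Fgold 1 = 1 := by
  have := Fgold_eq 1 0 (by norm_num)
  simp [fcut_zero'] at this
  simpa using this

/-! Smem : membership in the ℓ-th cut set -/
def Smem (m : ℕ) (x : ℝ) : Prop := ∃ n, n < 2^m ∧ fcut gp m n = x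

lemma S0 {x : ℝ} (h : Smem 0 x) : x = 0 := by
  obtain ⟨n, _, e⟩ := h
  rw [← e, fcut_zero]

lemma SP {m : ℕ} {x : ℝ} (h : Smem m x) : Smem (m+1) (gp * x) := by
  obtain ⟨n, hn, e⟩ := h
  exact ⟨n, by have := tps m; omega, by rw [fcut_succ, if_pos hn, e]⟩

lemma SQ {m : ℕ} {x : ℝ} (h : Smem m x) : Smem (m+1) (gp + (1 - gp) * x) := by
  obtain ⟨n, hn, e⟩ := h
  refine ⟨2^m + n, by have := tps m; omega, ?_⟩
  rw [fcut_succ, if_neg (by omega)]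
  congr 1
  rw [show 2^m + n - 2^m = n by omega, e]

lemma Szero : ∀ m, Smem m 0 := by
  intro m
  exact ⟨0, by positivity, fcut_zero' m⟩

lemma Sdecomp {m : ℕ} {x : ℝ} (h : Smem (m+1) x) :
    ∃ y, Smem m y ∧ (x = gp * y ∨ x = gp + (1 - gp) * y) := by
  obtain ⟨n, hn, e⟩ := h
  rcases lt_or_ge n (2^m) with h2 | h2
  · exact ⟨fcut gp m n, ⟨n, h2, rfl⟩, Or.inl (by rw [← e, fcut_succ, if_pos h2])⟩
  · refine ⟨fcut gp m (n - 2^m), ⟨n - 2^m, by have := tps m; omega, rfl⟩,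
      Or.inr (by rw [← e, fcut_succ, if_neg (by omega)])⟩

lemma Smono {m : ℕ} : ∀ {x : ℝ}, Smem m x → Smem (m+1) x := by
  induction m with
  | zero =>
    intro x h
    rw [S0 h]
    exact Szero 1
  | succ m ih =>
    intro x h
    obtain ⟨y, hy, hc | hc⟩ := Sdecomp h
    · rw [hc]; exact SP (ih hy)
    · rw [hc]; exact SQ (ih hy)

lemma SmonoLe {m m' : ℕ} (h : m ≤ m') {x : ℝ} (hx : Smem m x) : Smem m' x := by
  induction m' with
  | zero => rwa [Nat.le_zero.mp h] at hx
  | succ m' ih =>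
    rcases Nat.le_succ_iff.mp h with h2 | h2
    · exact Smono (ih h2)
    · rwa [h2] at hx

lemma Sbound {m : ℕ} {x : ℝ} (h : Smem m x) : 0 ≤ x ∧ x < 1 := by
  obtain ⟨n, hn, e⟩ := h
  exact ⟨e ▸ fcut_nonneg m n, e ▸ fcut_lt_one m n hn⟩

lemma Sgp : Smem 1 gp := by
  refine ⟨1, by norm_num, ?_⟩
  rw [fcut_succ, if_neg (by norm_num)]
  simp [fcut_zero]

/-- helper A -/
lemma lemA {m : ℕ} {x : ℝ} (h : Smem (m+1) x) :
    Smem (m+1) (gp + gp * x) ∨ ∃ w, Smem m w ∧ gp + gp * x = 1 + gp^3 * w := by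
  obtain ⟨y, hy, hc | hc⟩ := Sdecomp h
  · left
    have := SQ hy
    have e : gp + gp * x = gp + (1 - gp) * y := by
      rw [hc]; linear_combination y * hp
    rwa [e]
  · right
    refine ⟨y, hy, ?_⟩
    rw [hc]
    linear_combination (1 - gp * y) * hp

/-- helper B -/
lemma lemB : ∀ m, ∀ {x : ℝ}, Smem m x → Smem (m+2) (gp^2 + gp * x) := by
  intro m
  induction m with
  | zero =>
    intro x h
    rw [S0 h]
    have : Smem 2 (gp * gp) := SP Sgp
    have e : gp^2 + gp * 0 = gp * gp := by ring
    rwa [e]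
  | succ m ih =>
    intro x h
    obtain ⟨y, hy, hc | hc⟩ := Sdecomp h
    · -- x = gp y
      rcases Nat.eq_zero_or_pos m with hm | hm
      · subst hm
        rw [S0 hy] at hc
        rw [hc]
        have : Smem 2 (gp * gp) := SP Sgp
        have : Smem 3 (gp * gp) := Smono this
        have e : gp^2 + gp * (gp * 0) = gp * gp := by ring
        rwa [e]
      · obtain ⟨m', rfl⟩ : ∃ m', m = m' + 1 := ⟨m - 1, by omega⟩
        rcases lemA hy with h2 | ⟨w, hw, he⟩
        · have := SP h2
          have e : gp^2 + gp * x = gp * (gp + gp * y) := by rw [hc]; ring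
          rw [e]
          exact SmonoLe (by omega) this
        · have hw2 : Smem (m'+2) (gp * (gp * w)) := SP (SP hw)
          have := SQ hw2
          have e : gp^2 + gp * x = gp + (1 - gp) * (gp * (gp * w)) := by
            rw [hc]
            have : gp * (gp + gp * y) = gp * (1 + gp^3 * w) := by rw [he]
            linear_combination this + (gp * gp * w) * hp
          rw [e]
          exact SmonoLe (by omega) this
    · -- x = gp + (1-gp) y
      have h2 := ih hy
      have := SQ h2
      have e : gp^2 + gp * x = gp + (1 - gp) * (gp^2 + gp * y) := by
        rw [hc]
        linear_combination gp * hp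
      rw [e]
      exact SmonoLe (by omega) this

/-- Main addition lemma: cut sets are "closed under addition with carry". -/
lemma lemL : ∀ N a b : ℕ, ∀ x y : ℝ, a + b ≤ N → Smem a x → Smem b y →
    Smem (a+b) (x+y) ∨ ∃ u, Smem (a+b+1) u ∧ x + y = 1 + u := by
  intro N
  induction N with
  | zero =>
    intro a b x y hN hx hy
    obtain rfl : a = 0 := by omega
    obtain rfl : b = 0 := by omega
    left
    rw [S0 hx, S0 hy]
    simpa using Szero 0
  | succ N IH =>
    intro a b x y hN hx hy
    rcases Nat.eq_zero_or_pos a with rfl | ha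
    · left
      rw [S0 hx, zero_add, zero_add]
      exact hy
    rcases Nat.eq_zero_or_pos b with rfl | hb
    · left
      rw [S0 hy, add_zero, add_zero]
      exact hx
    obtain ⟨a', rfl⟩ : ∃ a', a = a' + 1 := ⟨a - 1, by omega⟩
    obtain ⟨b', rfl⟩ : ∃ b', b = b' + 1 := ⟨b - 1, by omega⟩
    obtain ⟨x₀, hx₀, hcx⟩ := Sdecomp hx
    obtain ⟨y₀, hy₀, hcy⟩ := Sdecomp hy
    rcases hcx with hcx | hcx <;> rcases hcy with hcy | hcy
    · -- PP : x = gp x₀, y = gp y₀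
      rcases IH a' b' x₀ y₀ (by omega) hx₀ hy₀ with hv | ⟨u, hu, he⟩
      · left
        have h1 := SP hv
        have e : x + y = gp * (x₀ + y₀) := by rw [hcx, hcy]; ring
        rw [e]
        exact SmonoLe (by omega) h1
      · have e : x + y = gp + gp * u := by
          rw [hcx, hcy]; linear_combination gp * he
        rcases lemA hu with h2 | ⟨w, hw, he2⟩
        · left
          rw [e]
          exact SmonoLe (by omega) h2
        · right
          refine ⟨gp^3 * w, ?_, by rw [e, he2]⟩
          have h3 := SP (SP (SP hw))
          have e3 : gp^3 * w = gp * (gp * (gp * w)) := by ring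
          rw [e3]
          exact SmonoLe (by omega) h3
    · -- PQ : x = gp x₀, y = gp + (1-gp) y₀
      rcases Nat.eq_zero_or_pos a' with rfl | ha'
      · left
        have e : x + y = y := by rw [hcx, S0 hx₀]; ring
        rw [e]
        exact SmonoLe (by omega) hy
      obtain ⟨a'', rfl⟩ : ∃ a'', a' = a'' + 1 := ⟨a' - 1, by omega⟩
      obtain ⟨x₁, hx₁, hcx1⟩ := Sdecomp hx₀
      rcases hcx1 with hcx1 | hcx1
      · -- x₀ = gp x₁
        rcases IH a'' b' x₁ y₀ (by omega) hx₁ hy₀ with hv | ⟨u, hu, he⟩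
        · left
          have h1 := SQ hv
          have e : x + y = gp + (1 - gp) * (x₁ + y₀) := by
            rw [hcx, hcx1, hcy]; linear_combination x₁ * hp
          rw [e]
          exact SmonoLe (by omega) h1
        · right
          refine ⟨gp^2 * u, ?_, ?_⟩
          · have h3 := SP (SP hu)
            have e3 : gp^2 * u = gp * (gp * u) := by ring
            rw [e3]
            exact SmonoLe (by omega) h3
          · rw [hcx, hcx1, hcy]
            linear_combination (1-gp) * he + (x₁ - u) * hp
      · -- x₀ = gp + (1-gp) x₁
        have hz : Smem (a''+1) (gp * x₁) := SP hx₁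
        rcases IH (a''+1) b' (gp*x₁) y₀ (by omega) hz hy₀ with hv | ⟨u, hu, he⟩
        · right
          refine ⟨gp^2 * (gp*x₁ + y₀), ?_, ?_⟩
          · have h3 := SP (SP hv)
            have e3 : gp^2 * (gp*x₁ + y₀) = gp * (gp * (gp*x₁ + y₀)) := by ring
            rw [e3]
            exact SmonoLe (by omega) h3
          · rw [hcx, hcx1, hcy]
            linear_combination (1 - gp*x₁ - y₀) * hp
        · rcases lemA hu with h2 | ⟨w, hw, he2⟩
          · right
            refine ⟨gp * (gp + gp*u), ?_, ?_⟩
            · exact SmonoLe (by omega) (SP h2)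
            · rw [hcx, hcx1, hcy]
              linear_combination (1-gp) * he - u * hp
          · right
            have h4 : gp * u = gp * (gp + gp^2 * w) := by linear_combination he2 - hp
            have hu4 : u = gp + gp^2 * w := mul_left_cancel₀ (ne_of_gt gp_pos) h4
            refine ⟨gp + (1-gp) * (gp * (gp * w)), ?_, ?_⟩
            · exact SmonoLe (by omega) (SQ (SP (SP hw)))
            · rw [hcx, hcx1, hcy]
              have hy0 : y₀ = 1 + u - gp * x₁ := by linarith [he]
              rw [hy0, hu4]
              ring
    · -- QP : x = gp + (1-gp) x₀, y = gp y₀  (mirror of PQ)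
      rcases Nat.eq_zero_or_pos b' with rfl | hb'
      · left
        have e : x + y = x := by rw [hcy, S0 hy₀]; ring
        rw [e]
        exact SmonoLe (by omega) hx
      obtain ⟨b'', rfl⟩ : ∃ b'', b' = b'' + 1 := ⟨b' - 1, by omega⟩
      obtain ⟨y₁, hy₁, hcy1⟩ := Sdecomp hy₀
      rcases hcy1 with hcy1 | hcy1
      · rcases IH a' b'' x₀ y₁ (by omega) hx₀ hy₁ with hv | ⟨u, hu, he⟩
        · left
          have h1 := SQ hv
          have e : x + y = gp + (1 - gp) * (x₀ + y₁) := by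
            rw [hcx, hcy, hcy1]; linear_combination y₁ * hp
          rw [e]
          exact SmonoLe (by omega) h1
        · right
          refine ⟨gp^2 * u, ?_, ?_⟩
          · have h3 := SP (SP hu)
            have e3 : gp^2 * u = gp * (gp * u) := by ring
            rw [e3]
            exact SmonoLe (by omega) h3
          · rw [hcx, hcy, hcy1]
            linear_combination (1-gp) * he + (y₁ - u) * hp
      · have hz : Smem (b''+1) (gp * y₁) := SP hy₁
        rcases IH a' (b''+1) x₀ (gp*y₁) (by omega) hx₀ hz with hv | ⟨u, hu, he⟩
        · right
          refine ⟨gp^2 * (x₀ + gp*y₁), ?_, ?_⟩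
          · have h3 := SP (SP hv)
            have e3 : gp^2 * (x₀ + gp*y₁) = gp * (gp * (x₀ + gp*y₁)) := by ring
            rw [e3]
            exact SmonoLe (by omega) h3
          · rw [hcx, hcy, hcy1]
            linear_combination (1 - gp*y₁ - x₀) * hp
        · rcases lemA hu with h2 | ⟨w, hw, he2⟩
          · right
            refine ⟨gp * (gp + gp*u), ?_, ?_⟩
            · exact SmonoLe (by omega) (SP h2)
            · rw [hcx, hcy, hcy1]
              linear_combination (1-gp) * he - u * hp
          · right
            have h4 : gp * u = gp * (gp + gp^2 * w) := by linear_combination he2 - hp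
            have hu4 : u = gp + gp^2 * w := mul_left_cancel₀ (ne_of_gt gp_pos) h4
            refine ⟨gp + (1-gp) * (gp * (gp * w)), ?_, ?_⟩
            · exact SmonoLe (by omega) (SQ (SP (SP hw)))
            · rw [hcx, hcy, hcy1]
              have hx0 : x₀ = 1 + u - gp * y₁ := by linarith [he]
              rw [hx0, hu4]
              ring
    · -- QQ : x = gp + (1-gp) x₀, y = gp + (1-gp) y₀
      rcases IH a' b' x₀ y₀ (by omega) hx₀ hy₀ with hv | ⟨u, hu, he⟩
      · right
        have hB := lemB (a'+b') hv
        refine ⟨gp * (gp^2 + gp*(x₀+y₀)), ?_, ?_⟩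
        · exact SmonoLe (by omega) (SP hB)
        · rw [hcx, hcy]
          linear_combination (1 - gp - x₀ - y₀) * hp
      · right
        refine ⟨gp + (1-gp) * u, ?_, ?_⟩
        · exact SmonoLe (by omega) (SQ hu)
        · rw [hcx, hcy]
          linear_combination (1-gp) * he

/-! Final assembly pieces -/

lemma Smem_Fgold {L : ℕ} {v : ℝ} (h : Smem L v) : ∃ k, Fgold k = (L:ℝ) + v := by
  obtain ⟨n, hn, e⟩ := h
  exact ⟨2^L - 1 + n, by rw [Fgold_eq L n hn, e]⟩

lemma Fgold_Smem (i : ℕ) :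
    Smem (Nat.log 2 (i+1)) (fcut gp (Nat.log 2 (i+1)) (i+1-2^(Nat.log 2 (i+1)))) := by
  refine ⟨i+1-2^(Nat.log 2 (i+1)), ?_, rfl⟩
  have := log_le i; have := log_gt i; have := tps (Nat.log 2 (i+1)); omega

lemma Fgold_add (i j : ℕ) : ∃ k, Fgold k = Fgold i + Fgold j := by
  have hi := Fgold_Smem i
  have hj := Fgold_Smem j
  rcases lemL (Nat.log 2 (i+1) + Nat.log 2 (j+1)) _ _ _ _ le_rfl hi hj with hv | ⟨u, hu, he⟩
  · obtain ⟨k, hk⟩ := Smem_Fgold hv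
    refine ⟨k, ?_⟩
    rw [hk, Fgold_def i, Fgold_def j]
    push_cast
    ring
  · obtain ⟨k, hk⟩ := Smem_Fgold hu
    refine ⟨k, ?_⟩
    rw [hk, Fgold_def i, Fgold_def j]
    push_cast
    linarith [he]

lemma period_Fgold (i : ℕ) : period Fgold i = {x | ∃ r < 2^i, x = (i:ℝ) + gc i r} := by
  ext x
  simp only [period, Set.mem_setOf_eq]
  constructor
  · rintro ⟨⟨k, rfl⟩, h1, h2⟩
    have hb1 := log_le k
    have hb2 := log_gt k
    have htp := tps (Nat.log 2 (k+1))
    have hf0 := gc_nonneg (Nat.log 2 (k+1)) (k+1-2^(Nat.log 2 (k+1)))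
    have hf1 : gc (Nat.log 2 (k+1)) (k+1-2^(Nat.log 2 (k+1))) < 1 := gc_lt_one (by omega)
    rw [Fgold_gc k] at h1 h2
    have hle : Nat.log 2 (k+1) ≤ i := by
      have : (Nat.log 2 (k+1) : ℝ) < i + 1 := by linarith
      exact_mod_cast Nat.lt_succ_iff.mp (by exact_mod_cast this)
    have hge : i ≤ Nat.log 2 (k+1) := by
      have : (i:ℝ) < Nat.log 2 (k+1) + 1 := by linarith
      exact_mod_cast Nat.lt_succ_iff.mp (by exact_mod_cast this)
    have hli : Nat.log 2 (k+1) = i := le_antisymm hle hge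
    subst hli
    exact ⟨k+1-2^(Nat.log 2 (k+1)), by omega, Fgold_gc k⟩
  · rintro ⟨r, hr, rfl⟩
    refine ⟨⟨2^i-1+r, by rw [Fgold_eq i r hr, gc_of_lt hr]⟩, ?_, ?_⟩
    · linarith [gc_nonneg i r]
    · linarith [gc_lt_one hr]

lemma gc11 : gc 1 1 = gp := by
  rw [gc_of_lt (by norm_num), fcut_succ, if_neg (by norm_num)]
  simp [fcut_zero]

lemma period_one : period Fgold 1 = {1, phi} := by
  rw [period_Fgold 1]
  ext x
  simp only [Set.mem_setOf_eq, Set.mem_insert_iff, Set.mem_singleton_iff]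
  constructor
  · rintro ⟨r, hr, rfl⟩
    interval_cases r
    · left; rw [gc_zero]; norm_num
    · right; rw [gc11]; unfold gp; push_cast; ring
  · rintro (rfl | rfl)
    · exact ⟨0, by norm_num, by rw [gc_zero]; norm_num⟩
    · exact ⟨1, by norm_num, by rw [gc11]; unfold gp; push_cast; ring⟩

lemma one_ne_phi : (1:ℝ) ≠ phi := by
  have := gp_pos
  unfold gp at this
  intro h
  rw [← h] at this
  norm_num at this

/-- the period `{1, φ}` generates a fractal mold: the sequence `F` is a
normalized ℝ-mold, has granularity `2` with first period `{1, φ}`, and is fractal. -/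
theorem Fgold_is_fractal_mold :
    IsRMold Fgold ∧ Fgold 1 = 1 ∧
    period Fgold 1 = {1, phi} ∧ (period Fgold 1).ncard = 2 ∧
    IsFractal Fgold := by
  refine ⟨⟨Fgold_strictMono, ?_, Fgold_zero, ?_, Fgold_add⟩, Fgold_one, period_one, ?_, ?_⟩
  · -- nonneg
    intro i
    rw [Fgold_def]
    exact add_nonneg (Nat.cast_nonneg _) (fcut_nonneg _ _)
  · -- gaps
    intro ε hε
    obtain ⟨L, hL⟩ := exists_pow_lt_of_lt_one hε gp_lt_one
    refine ⟨2^L, fun n hn => ?_⟩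
    have h1 := log_le n
    have h2 := log_gt n
    have htp := tps (Nat.log 2 (n+1))
    have hlog : L ≤ Nat.log 2 (n+1) :=
      (Nat.le_log_iff_pow_le one_lt_two (by omega)).mpr (by omega)
    have hgap := gc_gap (Nat.log 2 (n+1)) (n+1-2^(Nat.log 2 (n+1))) (by omega)
    have hmono : gp^(Nat.log 2 (n+1)) ≤ gp^L :=
      pow_le_pow_of_le_one gp_pos.le gp_lt_one.le hlog
    rw [Fgold_succ n, Fgold_gc n]
    linarith
  · -- ncard
    rw [period_one]
    exact Set.ncard_pair one_ne_phi
  · -- fractal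
    refine ⟨fun i => 2^i, gc, fun i => by positivity, gc_zero, fun i => gc_of_ge le_rfl,
      fun i r s hrs hs => gc_mono hrs hs, fun i => period_Fgold i, fun i => ?_⟩
    rw [period_Fgold (i+1)]
    ext x
    simp only [Set.mem_setOf_eq]
    have htp := tps i
    constructor
    · rintro ⟨n, hn, rfl⟩
      obtain ⟨r, s, hs2, rfl⟩ : ∃ r s, s < 2 ∧ n = 2*r+s := ⟨n/2, n%2, by omega, by omega⟩
      refine ⟨r, by omega, s, by norm_num; omega, ?_⟩
      have hmod : s = 0 ∨ s = 1 := by omega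
      rcases hmod with rfl | rfl
      · rw [show 2*r+0 = 2*r from rfl, E1 i r (by omega), gc_zero]
        push_cast
        ring
      · rw [E2 i r (by omega), gc11]
        push_cast
        ring
    · rintro ⟨r, hr, s, hs, rfl⟩
      have hs2 : s = 0 ∨ s = 1 := by norm_num at hs; omega
      refine ⟨2*r+s, by omega, ?_⟩
      rcases hs2 with rfl | rfl
      · rw [show 2*r+0 = 2*r from rfl, E1 i r hr.le, gc_zero]
        push_cast
        ring
      · rw [E2 i r hr, gc11]
        push_cast
        ring
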